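/- Let n ≥ 2 be an integer, let G be a finite abelian group isomorphic to C_2 ⊕ C_2 ⊕ C_{2n}, and let H = 2G = {2g : g ∈ G} be the unique subgroup of G with G/H ≅ C_2^3 (H is cyclic of order n). If S is a sequence over G of length 2n+3 containing no short zero-sum subsequence, then no element of S lies in H, i.e., supp(S) ∩ H = ∅. -/

import Mathlib

/- Auxiliary setup: `KK = C₂³` is the target of the mod-`2G` projection. -/
abbrev KK := ZMod 2 × ZMod 2 × ZMod 2

lemma KK_add_self : ∀ k : KK, k + k = 0 := by decide

set_option synthInstance.maxSize 2000 in
set_option synthInstance.maxHeartbeats 1000000 in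
lemma keyK : ∀ z : KK, ∃ a b c : KK, a ≠ 0 ∧ b ≠ 0 ∧ c ≠ 0 ∧ a ≠ z ∧ b ≠ z ∧ c ≠ z ∧
    a ≠ b ∧ a ≠ c ∧ b ≠ c ∧ a + b + c = 0 := by decide

lemma card7 : (Finset.univ.erase (0:KK)).card = 7 := by decide

/-- sum of a join of a list of multisets -/
lemma list_sum_sum {G : Type*} [AddCommMonoid G] (l : List (Multiset G)) :
    l.sum.sum = (l.map Multiset.sum).sum := by
  induction l with
  | nil => simp
  | cons B t ih => simp [Multiset.sum_add, ih]

lemma card_list_sum_le {G : Type*} (l : List (Multiset G)) (h : ∀ B ∈ l, Multiset.card B ≤ 2) :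
    Multiset.card l.sum ≤ 2 * l.length := by
  induction l with
  | nil => simp
  | cons B t ih =>
    simp only [List.sum_cons, Multiset.card_add, List.length_cons]
    have h1 := h B (by simp)
    have h2 := ih (fun C hC => h C (by simp [hC]))
    omega

lemma mem_le_list_sum {G : Type*} {B : Multiset G} {l : List (Multiset G)} (h : B ∈ l) :
    B ≤ l.sum := by
  induction l with
  | nil => simp at h
  | cons C t ih =>
    rcases List.mem_cons.mp h with rfl | h
    · simpa using Multiset.le_add_right _ _
    · exact le_trans (ih h) (by simpa using Multiset.le_add_left _ _)

/-- Davenport-type argument: given `n` nonempty blocks whose sums lie in `ker φ` (a group that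
`ψ` separates, of order `n`), some nonempty subcollection has total sum `0`. -/
lemma dav {G : Type*} [AddCommGroup G] (n : ℕ) (hn : 2 ≤ n)
    (φ : G →+ KK) (ψ : G → ZMod n)
    (hinj : ∀ y z : G, φ y = 0 → φ z = 0 → ψ y = ψ z → y = z)
    (l : List (Multiset G)) (hlen : l.length = n)
    (hne : ∀ B ∈ l, B ≠ 0) (hker : ∀ B ∈ l, φ B.sum = 0) :
    ∃ T : Multiset G, T ≤ l.sum ∧ T ≠ 0 ∧ T.sum = 0 := by
  haveI : NeZero n := ⟨by omega⟩
  set s : List G := l.map Multiset.sum with hs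
  have hslen : s.length = n := by simp [hs, hlen]
  have hkers : ∀ i : ℕ, φ ((s.take i).sum) = 0 := by
    intro i
    rw [map_list_sum]
    apply List.sum_eq_zero
    intro k hk
    rcases List.mem_map.mp hk with ⟨y, hy, rfl⟩
    have hy' : y ∈ s := List.mem_of_mem_take hy
    rcases List.mem_map.mp hy' with ⟨B, hB, rfl⟩
    exact hker B hB
  -- pigeonhole on prefix sums
  have hcard : Fintype.card (ZMod n) < Fintype.card (Fin (n+1)) := by
    rw [ZMod.card, Fintype.card_fin]; omega
  obtain ⟨i, j, hij, he⟩ := Fintype.exists_ne_map_eq_of_card_lt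
    (fun i : Fin (n+1) => ψ ((s.take i.val).sum)) hcard
  -- reduce to i < j
  have main : ∀ i j : ℕ, i < j → j ≤ n → (s.take i).sum = (s.take j).sum →
      ∃ T : Multiset G, T ≤ l.sum ∧ T ≠ 0 ∧ T.sum = 0 := by
    intro i j hij hjn hsum
    set m : List (Multiset G) := (l.drop i).take (j - i) with hm
    have hsplit : s.take j = s.take i ++ (s.drop i).take (j - i) := by
      rw [← List.take_add]
      congr 1
      omega
    have hmid : ((s.drop i).take (j - i)).sum = 0 := by
      have h' := hsum
      rw [hsplit, List.sum_append] at h'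
      exact (left_eq_add.mp h')
    have hmmap : m.map Multiset.sum = (s.drop i).take (j - i) := by
      rw [hm, hs, List.map_take, List.map_drop]
    have hmsub : m.Sublist l := (List.take_sublist _ _).trans (List.drop_sublist _ _)
    refine ⟨m.sum, ?_, ?_, ?_⟩
    · exact List.Sublist.sum_le_sum hmsub (fun a _ => Multiset.zero_le a)
    · have hmne : m ≠ [] := by
        have : m.length = min (j - i) (l.length - i) := by simp [hm]
        intro hnil
        rw [hnil] at this
        simp at this
        omega
      obtain ⟨B, hB⟩ := List.exists_mem_of_ne_nil m hmne
      have hBne : B ≠ 0 := hne B (hmsub.subset hB)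
      have hBle : B ≤ m.sum := mem_le_list_sum hB
      intro h0
      rw [h0] at hBle
      exact hBne (Multiset.le_zero.mp hBle)
    · rw [list_sum_sum, hmmap, hmid]
  rcases Nat.lt_or_ge i.val j.val with hlt | hge
  · exact main i.val j.val hlt (by omega) (hinj _ _ (hkers _) (hkers _) he)
  · have hlt : j.val < i.val := by
      rcases Nat.lt_or_ge j.val i.val with h' | h'
      · exact h'
      · exact absurd (Fin.ext (by omega)) hij
    exact main j.val i.val hlt (by omega) (hinj _ _ (hkers _) (hkers _) he.symm)

/-- Greedy extraction of blocks of size ≤ 2 with sum in `ker φ`. -/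
lemma extract {G : Type*} [AddCommGroup G] [DecidableEq G] (φ : G →+ KK) (T : Multiset G) :
    ∃ (bl : List (Multiset G)) (R : Multiset G),
      bl.sum + R = T ∧ (∀ B ∈ bl, B ≠ 0 ∧ Multiset.card B ≤ 2 ∧ φ B.sum = 0) ∧
      (∀ r ∈ R, φ r ≠ 0) ∧ (∀ y ∈ R, ∀ z ∈ R.erase y, φ y ≠ φ z) := by
  induction T using Multiset.strongInductionOn with
  | ih T IH =>
  by_cases h0 : ∃ y ∈ T, φ y = 0
  · obtain ⟨y, hy, hy0⟩ := h0
    obtain ⟨bl, R, hsum, hbl, hR, hRd⟩ := IH (T.erase y) (Multiset.erase_lt.mpr hy)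
    refine ⟨({y} : Multiset G) :: bl, R, ?_, ?_, hR, hRd⟩
    · rw [List.sum_cons, add_assoc, hsum, Multiset.singleton_add, Multiset.cons_erase hy]
    · intro B hB
      rcases List.mem_cons.mp hB with rfl | hB
      · exact ⟨by simp, by simp, by simpa using hy0⟩
      · exact hbl B hB
  · by_cases h2 : ∃ y ∈ T, ∃ z ∈ T.erase y, φ y = φ z
    · obtain ⟨y, hy, z, hz, hyz⟩ := h2
      obtain ⟨bl, R, hsum, hbl, hR, hRd⟩ := IH ((T.erase y).erase z)
        (lt_trans (Multiset.erase_lt.mpr hz) (Multiset.erase_lt.mpr hy))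
      refine ⟨(y ::ₘ {z}) :: bl, R, ?_, ?_, hR, hRd⟩
      · rw [List.sum_cons, add_assoc, hsum]
        rw [Multiset.cons_add, Multiset.singleton_add, Multiset.cons_erase hz,
          Multiset.cons_erase hy]
      · intro B hB
        rcases List.mem_cons.mp hB with rfl | hB
        · refine ⟨by simp, by simp, ?_⟩
          have : (y ::ₘ ({z} : Multiset G)).sum = y + z := by simp
          rw [this, map_add, hyz]
          exact KK_add_self _
        · exact hbl B hB
    · push_neg at h0 h2
      exact ⟨[], T, by simp, by simp, h0, h2⟩

lemma nodup_of_pairwise {G : Type*} [DecidableEq G] (φ : G → KK) (R : Multiset G)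
    (hRd : ∀ y ∈ R, ∀ z ∈ R.erase y, φ y ≠ φ z) : (R.map φ).Nodup := by
  rw [Multiset.nodup_iff_count_le_one]
  intro a
  by_contra hc
  push_neg at hc
  have ha : a ∈ R.map φ := by rw [← Multiset.count_pos]; omega
  obtain ⟨y, hy, rfl⟩ := Multiset.mem_map.mp ha
  have hsplit : R.map φ = φ y ::ₘ (R.erase y).map φ := by
    conv_lhs => rw [← Multiset.cons_erase hy]
    rw [Multiset.map_cons]
  rw [hsplit, Multiset.count_cons_self] at hc
  have : φ y ∈ (R.erase y).map φ := by rw [← Multiset.count_pos]; omega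
  obtain ⟨z, hz, hzy⟩ := Multiset.mem_map.mp this
  exact hRd y hy z hz hzy.symm

/-- Among ≥6 elements with pairwise distinct nonzero images in `C₂³`, there is a zero-sum triple. -/
lemma triple {G : Type*} [AddCommGroup G] [DecidableEq G] (φ : G →+ KK) (R : Multiset G)
    (hR0 : ∀ r ∈ R, φ r ≠ 0) (hRd : ∀ y ∈ R, ∀ z ∈ R.erase y, φ y ≠ φ z)
    (h6 : 6 ≤ Multiset.card R) :
    ∃ B : Multiset G, B ≤ R ∧ B ≠ 0 ∧ Multiset.card B = 3 ∧ φ B.sum = 0 := by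
  have hnd := nodup_of_pairwise (fun g => φ g) R hRd
  set F : Finset KK := ⟨R.map (fun g => φ g), hnd⟩ with hF
  have hFcard : F.card = Multiset.card R := by simp [hF]
  have hmemF : ∀ k : KK, k ∈ F ↔ k ∈ R.map (fun g => φ g) := fun k => Iff.rfl
  have h0F : (0 : KK) ∉ F := by
    rw [hmemF]
    intro h
    obtain ⟨r, hr, hr0⟩ := Multiset.mem_map.mp h
    exact hR0 r hr hr0
  have hFsub : F ⊆ Finset.univ.erase 0 := by
    intro k hk
    exact Finset.mem_erase.mpr ⟨fun h => h0F (h ▸ hk), Finset.mem_univ _⟩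
  have hC : ((Finset.univ.erase (0:KK)) \ F).card ≤ 1 := by
    rw [Finset.card_sdiff_of_subset hFsub, card7]
    omega
  obtain ⟨z, hz⟩ : ∃ z : KK, ∀ k : KK, k ≠ 0 → k ≠ z → k ∈ F := by
    rcases Finset.eq_empty_or_nonempty ((Finset.univ.erase (0:KK)) \ F) with hE | ⟨z, hzC⟩
    · refine ⟨0, fun k hk _ => ?_⟩
      by_contra hkF
      have : k ∈ (Finset.univ.erase (0:KK)) \ F :=
        Finset.mem_sdiff.mpr ⟨Finset.mem_erase.mpr ⟨hk, Finset.mem_univ _⟩, hkF⟩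
      simp [hE] at this
    · refine ⟨z, fun k hk hkz => ?_⟩
      by_contra hkF
      have hkC : k ∈ (Finset.univ.erase (0:KK)) \ F :=
        Finset.mem_sdiff.mpr ⟨Finset.mem_erase.mpr ⟨hk, Finset.mem_univ _⟩, hkF⟩
      exact hkz (Finset.card_le_one.mp hC _ hkC _ hzC)
  obtain ⟨a, b, c, ha0, hb0, hc0, haz, hbz, hcz, hab, hac, hbc, habc⟩ := keyK z
  have haM : a ∈ R.map (fun g => φ g) := (hmemF a).mp (hz a ha0 haz)
  obtain ⟨x1, hx1, hφ1⟩ := Multiset.mem_map.mp haM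
  have hsplit1 : R.map (fun g => φ g) = φ x1 ::ₘ (R.erase x1).map (fun g => φ g) := by
    conv_lhs => rw [← Multiset.cons_erase hx1]
    rw [Multiset.map_cons]
  have hbM : b ∈ (R.erase x1).map (fun g => φ g) := by
    have hb' : b ∈ R.map (fun g => φ g) := (hmemF b).mp (hz b hb0 hbz)
    rw [hsplit1, Multiset.mem_cons] at hb'
    rcases hb' with h | h
    · exact absurd (h.trans hφ1) hab.symm
    · exact h
  obtain ⟨x2, hx2, hφ2⟩ := Multiset.mem_map.mp hbM
  have hsplit2 : (R.erase x1).map (fun g => φ g) =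
      φ x2 ::ₘ ((R.erase x1).erase x2).map (fun g => φ g) := by
    conv_lhs => rw [← Multiset.cons_erase hx2]
    rw [Multiset.map_cons]
  have hcM : c ∈ ((R.erase x1).erase x2).map (fun g => φ g) := by
    have hc' : c ∈ R.map (fun g => φ g) := (hmemF c).mp (hz c hc0 hcz)
    rw [hsplit1, Multiset.mem_cons] at hc'
    rcases hc' with h | h
    · exact absurd (h.trans hφ1) hac.symm
    · rw [hsplit2, Multiset.mem_cons] at h
      rcases h with h | h
      · exact absurd (h.trans hφ2) hbc.symm
      · exact h
  obtain ⟨x3, hx3, hφ3⟩ := Multiset.mem_map.mp hcM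
  refine ⟨x1 ::ₘ x2 ::ₘ {x3}, ?_, by simp, by simp, ?_⟩
  · have h3 : ({x3} : Multiset G) ≤ (R.erase x1).erase x2 := Multiset.singleton_le.mpr hx3
    have h23 : x2 ::ₘ {x3} ≤ R.erase x1 := by
      calc x2 ::ₘ ({x3} : Multiset G) ≤ x2 ::ₘ (R.erase x1).erase x2 :=
            Multiset.cons_le_cons _ h3
        _ = R.erase x1 := Multiset.cons_erase hx2
    calc x1 ::ₘ x2 ::ₘ ({x3} : Multiset G) ≤ x1 ::ₘ R.erase x1 := Multiset.cons_le_cons _ h23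
      _ = R := Multiset.cons_erase hx1
  · have : (x1 ::ₘ x2 ::ₘ ({x3} : Multiset G)).sum = x1 + (x2 + x3) := by simp
    rw [this, map_add, map_add, hφ1, hφ2, hφ3, ← add_assoc, habc]

/-- A sequence of length `2n+3` over `G ≅ C₂ ⊕ C₂ ⊕ C₂ₙ` without short zero-sum
subsequence contains no element of the subgroup `H = 2G`. -/
theorem stmt_18 (n : ℕ) (hn : 2 ≤ n) (G : Type*) [AddCommGroup G] [Fintype G]
    (hG : Nonempty (G ≃+ (ZMod 2 × ZMod 2 × ZMod (2 * n))))
    (S : Multiset G) (hcard : Multiset.card S = 2 * n + 3)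
    (h : ¬ ∃ T : Multiset G, T ≤ S ∧ T ≠ 0 ∧ Multiset.card T ≤ 2 * n ∧ T.sum = 0) :
    ∀ x ∈ S, x ∉ {y : G | ∃ g : G, 2 • g = y} := by
  intro x hxS hxH
  obtain ⟨e⟩ := hG
  haveI : DecidableEq G := e.toEquiv.decidableEq
  haveI : NeZero n := ⟨by omega⟩
  haveI : NeZero (2 * n) := ⟨by omega⟩
  have hdvd : (2:ℕ) ∣ 2 * n := ⟨n, rfl⟩
  apply h
  -- the projection mod 2G
  set φ : G →+ KK :=
    { toFun := fun g => ((e g).1, (e g).2.1, ZMod.castHom hdvd (ZMod 2) (e g).2.2),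
      map_zero' := by simp
      map_add' := by
        intro a b
        show ((e (a+b)).1, (e (a+b)).2.1, ZMod.castHom hdvd (ZMod 2) (e (a+b)).2.2) = _
        rw [map_add]
        exact Prod.ext rfl (Prod.ext rfl (map_add _ _ _)) } with hφdef
  have hφ_apply : ∀ g : G, φ g = ((e g).1, (e g).2.1, ZMod.castHom hdvd (ZMod 2) (e g).2.2) :=
    fun g => rfl
  set ψ : G → ZMod n := fun g => (((e g).2.2.val / 2 : ℕ) : ZMod n) with hψdef
  -- injectivity of ψ on ker φ
  have hker_char : ∀ y : G, φ y = 0 → (e y).1 = 0 ∧ (e y).2.1 = 0 ∧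
      2 ∣ (e y).2.2.val := by
    intro y hy
    rw [hφ_apply, Prod.ext_iff, Prod.ext_iff] at hy
    obtain ⟨h1, h2, h3⟩ := hy
    refine ⟨h1, h2, ?_⟩
    rw [ZMod.castHom_apply, ← ZMod.natCast_val] at h3
    exact (ZMod.natCast_eq_zero_iff _ _).mp h3
  have hinj : ∀ y z : G, φ y = 0 → φ z = 0 → ψ y = ψ z → y = z := by
    intro y z hy hz hψ
    obtain ⟨hy1, hy2, ky, hky⟩ := hker_char y hy
    obtain ⟨hz1, hz2, kz, hkz⟩ := hker_char z hz
    have hylt := ZMod.val_lt (e y).2.2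
    have hzlt := ZMod.val_lt (e z).2.2
    have hkyn : (e y).2.2.val / 2 < n := by omega
    have hkzn : (e z).2.2.val / 2 < n := by omega
    have hvals : (e y).2.2.val / 2 = (e z).2.2.val / 2 := by
      have := congrArg ZMod.val hψ
      rwa [ZMod.val_natCast_of_lt hkyn, ZMod.val_natCast_of_lt hkzn] at this
    have hval : (e y).2.2.val = (e z).2.2.val := by omega
    have h3 : (e y).2.2 = (e z).2.2 := ZMod.val_injective _ hval
    have : e y = e z :=
      Prod.ext (hy1.trans hz1.symm) (Prod.ext (hy2.trans hz2.symm) h3)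
    exact e.injective this
  -- x lies in the kernel of φ
  have hxφ : φ x = 0 := by
    obtain ⟨g, hg⟩ := hxH
    rw [← hg, map_nsmul, two_nsmul]
    exact KK_add_self _
  -- extract small blocks
  set T0 := S.erase x with hT0
  have hT0card : Multiset.card T0 = 2 * n + 2 := by
    rw [hT0, Multiset.card_erase_of_mem hxS, hcard]
    rfl
  obtain ⟨bl, R, hsum, hbl, hR0, hRd⟩ := extract φ T0
  have hcards : Multiset.card bl.sum + Multiset.card R = 2 * n + 2 := by
    rw [← Multiset.card_add, hsum, hT0card]
  have hblsum_le : Multiset.card bl.sum ≤ 2 * bl.length :=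
    card_list_sum_le bl (fun B hB => (hbl B hB).2.1)
  have hR7 : Multiset.card R ≤ 7 := by
    have hnd := nodup_of_pairwise (fun g => φ g) R hRd
    have hsub : (⟨R.map (fun g => φ g), hnd⟩ : Finset KK) ⊆ Finset.univ.erase 0 := by
      intro k hk
      have hk' : k ∈ R.map (fun g => φ g) := hk
      obtain ⟨r, hr, hrk⟩ := Multiset.mem_map.mp hk'
      exact Finset.mem_erase.mpr ⟨fun h0 => hR0 r hr (hrk.trans h0), Finset.mem_univ _⟩
    have := Finset.card_le_card hsub
    rw [card7] at this
    simpa using this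
  -- the block list l of length n, total size ≤ 2n, sums in ker φ
  have hfinal : ∃ l : List (Multiset G), l.length = n ∧ (∀ B ∈ l, B ≠ 0) ∧
      (∀ B ∈ l, φ B.sum = 0) ∧ l.sum ≤ S ∧ Multiset.card l.sum ≤ 2 * n := by
    by_cases hN : n - 1 ≤ bl.length
    · refine ⟨({x} : Multiset G) :: bl.take (n - 1), ?_, ?_, ?_, ?_, ?_⟩
      · simp only [List.length_cons, List.length_take]
        omega
      · intro B hB
        rcases List.mem_cons.mp hB with rfl | hB
        · simp
        · exact (hbl B (List.mem_of_mem_take hB)).1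
      · intro B hB
        rcases List.mem_cons.mp hB with rfl | hB
        · simpa using hxφ
        · exact (hbl B (List.mem_of_mem_take hB)).2.2
      · rw [List.sum_cons]
        have h1 : (bl.take (n - 1)).sum ≤ bl.sum :=
          List.Sublist.sum_le_sum (List.take_sublist _ _) (fun a _ => Multiset.zero_le a)
        have h2 : bl.sum ≤ T0 := le_trans (Multiset.le_add_right _ _) (le_of_eq hsum)
        calc ({x} : Multiset G) + (bl.take (n - 1)).sum ≤ {x} + T0 :=
              add_le_add_right (le_trans h1 h2) _
          _ = S := by rw [hT0, Multiset.singleton_add, Multiset.cons_erase hxS]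
      · rw [List.sum_cons, Multiset.card_add]
        have h1 : Multiset.card (bl.take (n - 1)).sum ≤ 2 * (bl.take (n - 1)).length :=
          card_list_sum_le _ (fun B hB => (hbl B (List.mem_of_mem_take hB)).2.1)
        have h2 : (bl.take (n - 1)).length ≤ n - 1 := by simp [List.length_take]
        simp only [Multiset.card_singleton]
        omega
    · -- bl.length ≤ n - 2; extract a triple from R
      have hlen2 : bl.length ≤ n - 2 := by omega
      have hR6 : 6 ≤ Multiset.card R := by omega
      obtain ⟨B0, hB0le, hB0ne, hB0card, hB0sum⟩ := triple φ R hR0 hRd hR6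
      have hlenge : n - 2 ≤ bl.length := by omega
      refine ⟨({x} : Multiset G) :: B0 :: bl, ?_, ?_, ?_, ?_, ?_⟩
      · simp only [List.length_cons]
        omega
      · intro B hB
        rcases List.mem_cons.mp hB with rfl | hB
        · simp
        · rcases List.mem_cons.mp hB with rfl | hB
          · exact hB0ne
          · exact (hbl B hB).1
      · intro B hB
        rcases List.mem_cons.mp hB with rfl | hB
        · simpa using hxφ
        · rcases List.mem_cons.mp hB with rfl | hB
          · exact hB0sum
          · exact (hbl B hB).2.2
      · rw [List.sum_cons, List.sum_cons]
        have h1 : B0 + bl.sum ≤ R + bl.sum := add_le_add_left hB0le _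
        have h2 : R + bl.sum = T0 := by rw [add_comm, hsum]
        calc ({x} : Multiset G) + (B0 + bl.sum) ≤ {x} + T0 := by
              rw [← h2]; exact add_le_add_right h1 _
          _ = S := by rw [hT0, Multiset.singleton_add, Multiset.cons_erase hxS]
      · rw [List.sum_cons, List.sum_cons, Multiset.card_add, Multiset.card_add]
        simp only [Multiset.card_singleton, hB0card]
        omega
  obtain ⟨l, hlen, hne, hker, hlS, hlcard⟩ := hfinal
  obtain ⟨T, hTle, hTne, hTsum⟩ := dav n hn φ ψ hinj l hlen hne hker
  exact ⟨T, le_trans hTle hlS, hTne,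
    le_trans (Multiset.card_le_card hTle) hlcard, hTsum⟩
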